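/- Assume all eight w_{ijk} are nonzero, and that F_{·1·} ≠ 0, F_{1··} = 0 and H ≠ 0. Then the set S = {(x,y) ∈ ℂ² : f₀(x,y) = 0 and f₁(x,y) = 0} has exactly one element (x*,y*). Furthermore: if F_{0··} ≠ 0 and F_{·0·} ≠ 0, then x* ≠ 0 and y* ≠ 0; if F_{0··} = 0 then x* = 0; and if F_{·0·} = 0 then y* = 0. -/

import Mathlib

theorem stmt_4 (w000 w001 w010 w011 w100 w101 w110 w111 : ℂ)
    (h000 : w000 ≠ 0) (h001 : w001 ≠ 0) (h010 : w010 ≠ 0) (h011 : w011 ≠ 0)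
    (h100 : w100 ≠ 0) (h101 : w101 ≠ 0) (h110 : w110 ≠ 0) (h111 : w111 ≠ 0)
    (hFd1 : w010 * w111 - w110 * w011 ≠ 0)
    (hF1d : w100 * w111 - w110 * w101 = 0)
    (hH : ((w000 * w111 - w001 * w110) - (w010 * w101 - w011 * w100)) ^ 2
      - 4 * (w000 * w011 - w010 * w001) * (w100 * w111 - w110 * w101) ≠ 0)
    (S : Set (ℂ × ℂ))
    (hS : S = {p : ℂ × ℂ |
      w000 + w100 * p.1 + w010 * p.2 + w110 * p.1 * p.2 = 0 ∧
      w001 + w101 * p.1 + w011 * p.2 + w111 * p.1 * p.2 = 0}) :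
    ∃ xs ys : ℂ, S = {(xs, ys)}
    ∧ ((w000 * w011 - w010 * w001 ≠ 0 ∧ w000 * w101 - w100 * w001 ≠ 0) →
        (xs ≠ 0 ∧ ys ≠ 0))
    ∧ (w000 * w011 - w010 * w001 = 0 → xs = 0)
    ∧ (w000 * w101 - w100 * w001 = 0 → ys = 0) := by
  have hD : w000 * w111 - w001 * w110 - w010 * w101 + w011 * w100 ≠ 0 := by
    intro h
    apply hH
    linear_combination (w000 * w111 - w001 * w110 - w010 * w101 + w011 * w100) * h
      - 4 * (w000 * w011 - w010 * w001) * hF1d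
  set xs : ℂ := -(w000 * w011 - w010 * w001) /
      (w000 * w111 - w001 * w110 - w010 * w101 + w011 * w100) with hxs
  have hxsD : (w000 * w111 - w001 * w110 - w010 * w101 + w011 * w100) * xs
      + (w000 * w011 - w010 * w001) = 0 := by
    rw [hxs]
    field_simp
    ring
  have hBne : w010 + w110 * xs ≠ 0 ∨ w011 + w111 * xs ≠ 0 := by
    by_contra hc
    push_neg at hc
    exact hFd1 (by linear_combination w111 * hc.1 - w110 * hc.2)
  obtain ⟨ys, he0, he1⟩ : ∃ ys : ℂ,
      w000 + w100 * xs + w010 * ys + w110 * xs * ys = 0 ∧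
      w001 + w101 * xs + w011 * ys + w111 * xs * ys = 0 := by
    by_cases hB0 : w010 + w110 * xs = 0
    · have hB1 : w011 + w111 * xs ≠ 0 := by
        intro h
        exact hFd1 (by linear_combination w111 * hB0 - w110 * h)
      have hA0 : w000 + w100 * xs = 0 := by
        have h2 : (w000 + w100 * xs) * (w011 + w111 * xs) = 0 := by
          linear_combination hxsD + xs ^ 2 * hF1d + (w001 + w101 * xs) * hB0
        exact (mul_eq_zero.mp h2).resolve_right hB1
      refine ⟨-(w001 + w101 * xs) / (w011 + w111 * xs), ?_, ?_⟩
      · linear_combination hA0 + (-(w001 + w101 * xs) / (w011 + w111 * xs)) * hB0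
      · have hinv := mul_inv_cancel₀ hB1
        linear_combination (-(w001 + w101 * xs)) * hinv
    · refine ⟨-(w000 + w100 * xs) / (w010 + w110 * xs), ?_, ?_⟩
      · have hinv := mul_inv_cancel₀ hB0
        linear_combination (-(w000 + w100 * xs)) * hinv
      · have key : (w001 + w101 * xs) * (w010 + w110 * xs)
            - (w011 + w111 * xs) * (w000 + w100 * xs) = 0 := by
          linear_combination -hxsD - xs ^ 2 * hF1d
        have hinv := mul_inv_cancel₀ hB0
        linear_combination (w010 + w110 * xs)⁻¹ * key - (w001 + w101 * xs) * hinv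
  have hSet : S = {(xs, ys)} := by
    rw [hS]
    ext ⟨x, y⟩
    simp only [Set.mem_setOf_eq, Set.mem_singleton_iff, Prod.mk.injEq]
    constructor
    · rintro ⟨e0, e1⟩
      have hxD : (w000 * w111 - w001 * w110 - w010 * w101 + w011 * w100) * x
          + (w000 * w011 - w010 * w001) = 0 := by
        linear_combination (w011 + w111 * x) * e0 - (w010 + w110 * x) * e1 - x ^ 2 * hF1d
      have hx : x = xs := by
        have h3 : (w000 * w111 - w001 * w110 - w010 * w101 + w011 * w100) * (x - xs) = 0 := by
          linear_combination hxD - hxsD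
        rcases mul_eq_zero.mp h3 with h | h
        · exact absurd h hD
        · exact sub_eq_zero.mp h
      subst hx
      refine ⟨rfl, ?_⟩
      have hd0 : (w010 + w110 * xs) * (y - ys) = 0 := by linear_combination e0 - he0
      have hd1 : (w011 + w111 * xs) * (y - ys) = 0 := by linear_combination e1 - he1
      rcases hBne with hB | hB
      · exact sub_eq_zero.mp ((mul_eq_zero.mp hd0).resolve_left hB)
      · exact sub_eq_zero.mp ((mul_eq_zero.mp hd1).resolve_left hB)
    · rintro ⟨rfl, rfl⟩
      exact ⟨he0, he1⟩
  refine ⟨xs, ys, hSet, ?_, ?_, ?_⟩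
  · rintro ⟨hF0, hF0d⟩
    constructor
    · intro h
      apply hF0
      linear_combination hxsD - (w000 * w111 - w001 * w110 - w010 * w101 + w011 * w100) * h
    · intro h
      apply hF0d
      linear_combination w101 * he0 - w100 * he1
        - (w010 * w101 + w110 * w101 * xs - w011 * w100 - w111 * w100 * xs) * h
  · intro hF0
    have h3 : (w000 * w111 - w001 * w110 - w010 * w101 + w011 * w100) * xs = 0 := by
      linear_combination hxsD - hF0
    exact (mul_eq_zero.mp h3).resolve_left hD
  · intro h
    have hmem : ((-w000 / w100 : ℂ), (0 : ℂ)) ∈ S := by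
      rw [hS]
      refine ⟨?_, ?_⟩
      · show w000 + w100 * (-w000 / w100) + w010 * 0 + w110 * (-w000 / w100) * 0 = 0
        field_simp
        ring
      · show w001 + w101 * (-w000 / w100) + w011 * 0 + w111 * (-w000 / w100) * 0 = 0
        field_simp
        linear_combination -h
    rw [hSet, Set.mem_singleton_iff] at hmem
    exact (congrArg Prod.snd hmem).symm
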